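/- Let F be a field with char(F) ≠ 2 and let D be a division F-algebra of degree 2 (every element satisfies a monic quadratic over F, and some element does not lie in F). Then D is either a quadratic field extension of F or a quaternion algebra over F. -/

import Mathlib

open Quaternion

namespace FrobAux

variable {F D : Type*} [Field F] [DivisionRing D] [Algebra F D]

/-- x is a scalar -/
def InF (F : Type*) {D : Type*} [Field F] [DivisionRing D] [Algebra F D] (x : D) : Prop :=
  ∃ c : F, x = c • (1 : D)

/-- pure element: square is scalar, and not a scalar unless zero -/
def Pure (F : Type*) {D : Type*} [Field F] [DivisionRing D] [Algebra F D] (x : D) : Prop :=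
  (∃ a : F, x * x = a • (1 : D)) ∧ (x = 0 ∨ ¬ InF F x)

theorem smul_one_inj {a b : F} (h : a • (1:D) = b • (1:D)) : a = b := by
  have : NoZeroSMulDivisors F D := inferInstance
  have h2 : (a - b) • (1:D) = 0 := by rw [sub_smul, h, sub_self]
  rcases smul_eq_zero.mp h2 with h3 | h3
  · exact sub_eq_zero.mp h3
  · exact absurd h3 one_ne_zero

theorem smul_one_eq_zero {a : F} (h : a • (1:D) = 0) : a = 0 := by
  have := smul_one_inj (D := D) (a := a) (b := 0) (by simpa using h)
  simpa using this

theorem not_inF_smul {x : D} (hx : ¬ InF F x) {c : F} (hc : c ≠ 0) : ¬ InF F (c • x) := by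
  rintro ⟨e, he⟩
  exact hx ⟨c⁻¹ * e, by rw [mul_smul, ← he, inv_smul_smul₀ hc]⟩

/-- degree-2 hypothesis in smul form -/
theorem deg2' (hdeg2 : ∀ x : D, ∃ t n : F,
      x ^ 2 - algebraMap F D t * x + algebraMap F D n = 0) (x : D) :
    ∃ t n : F, x * x = t • x + n • (1:D) := by
  obtain ⟨t, n, h⟩ := hdeg2 x
  refine ⟨t, -n, ?_⟩
  have : x ^ 2 = algebraMap F D t * x - algebraMap F D n := by
    have h1 := eq_neg_of_add_eq_zero_left h
    have h2 := sub_eq_iff_eq_add.mp h1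
    rw [h2]; abel
  rw [← pow_two, this, Algebra.algebraMap_eq_smul_one, Algebra.algebraMap_eq_smul_one,
    smul_mul_assoc, one_mul, neg_smul, sub_eq_add_neg]

theorem decomp (hdeg2 : ∀ x : D, ∃ t n : F,
      x ^ 2 - algebraMap F D t * x + algebraMap F D n = 0)
    (hchar : (2:F) ≠ 0) (x : D) :
    ∃ (c : F) (v : D), x = c • (1:D) + v ∧ Pure F v := by
  by_cases hx : InF F x
  · obtain ⟨c, hc⟩ := hx
    exact ⟨c, 0, by simp [hc], ⟨⟨0, by simp⟩, Or.inl rfl⟩⟩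
  · obtain ⟨t, n, h⟩ := deg2' hdeg2 x
    refine ⟨t/2, x - (t/2) • 1, by abel, ⟨⟨n + (t/2)*(t/2), ?_⟩, Or.inr ?_⟩⟩
    · have : (x - (t/2) • 1) * (x - (t/2) • 1)
          = x * x - t • x + ((t/2)*(t/2)) • (1:D) := by
        simp only [sub_mul, mul_sub, smul_mul_assoc, mul_smul_comm, smul_smul, one_mul, mul_one]
        have ht : t = (t/2) + (t/2) := by field_simp; ring
        rw [show (t:F) • x = ((t/2) + (t/2)) • x from by rw [← ht]]
        module
      rw [this, h]; module
    · intro ⟨c, hc⟩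
      refine hx ⟨c + t/2, ?_⟩
      have : x = c • (1:D) + (t/2) • 1 := by rw [← hc]; abel
      rw [this]; module


/-- square of a nonzero element is a nonzero scalar -/
theorem sq_ne_zero {x : D} {a : F} (hx : x * x = a • (1:D)) (h0 : x ≠ 0) : a ≠ 0 := by
  intro ha
  rw [ha, zero_smul] at hx
  exact h0 (by rcases mul_eq_zero.mp hx with h | h <;> exact h)

/-- if a pure nonzero x lies in span{1, y} with y pure nonzero, then x is a multiple of y,
and the anticommutator is scalar -/
theorem anticomm_of_span (hchar : (2:F) ≠ 0) {x y : D} {a b c d : F}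
    (hx2 : x * x = a • (1:D)) (hy2 : y * y = b • (1:D))
    (hx : ¬ InF F x) (hy : ¬ InF F y)
    (hcd : x = c • (1:D) + d • y) :
    ∃ s : F, x * y + y * x = s • (1:D) := by
  have hexp : x * x = (c*c + d*(d*b)) • (1:D) + (2*(c*d)) • y := by
    rw [hcd]
    simp only [mul_add, add_mul, smul_mul_assoc, mul_smul_comm, smul_smul, one_mul, mul_one]
    rw [hy2]
    simp only [smul_smul]
    module
  have key : (2*(c*d)) • y = (a - (c*c + d*(d*b))) • (1:D) := by
    rw [hx2] at hexp
    have h3 := eq_sub_of_add_eq' hexp.symm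
    rw [h3, sub_smul]
  have hcd0 : c * d = 0 := by
    by_contra hne
    have h2cd : (2*(c*d)) ≠ 0 := mul_ne_zero hchar hne
    exact hy ⟨(2*(c*d))⁻¹ * (a - (c*c + d*(d*b))),
      by rw [mul_smul, ← key, inv_smul_smul₀ h2cd]⟩
  have hc0 : c = 0 := by
    rcases mul_eq_zero.mp hcd0 with h | h
    · exact h
    · exfalso; apply hx; exact ⟨c, by rw [hcd, h, zero_smul, add_zero]⟩
  have hxy : x = d • y := by rw [hcd, hc0, zero_smul, zero_add]
  refine ⟨d*b + d*b, ?_⟩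
  rw [hxy, smul_mul_assoc, mul_smul_comm, hy2, smul_smul, add_smul]

/-- linear shuffling helper -/
theorem eq_of_sub_eq_sub {M : Type*} [AddCommGroup M] {a b c d : M}
    (h1 : a - b = c - d) (h2 : c = d) : a = b :=
  sub_eq_zero.mp (by rw [h1, h2, sub_self])

/-- anticommutator of two pure elements is scalar -/
theorem anticomm (hchar : (2:F) ≠ 0)
    (hdeg2 : ∀ x : D, ∃ t n : F,
      x ^ 2 - algebraMap F D t * x + algebraMap F D n = 0)
    {x y : D} (hx : Pure F x) (hy : Pure F y) :
    ∃ s : F, x * y + y * x = s • (1:D) := by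
  obtain ⟨⟨a, hx2⟩, hx1⟩ := hx
  obtain ⟨⟨b, hy2⟩, hy1⟩ := hy
  rcases eq_or_ne x 0 with rfl | hx0
  · exact ⟨0, by simp⟩
  rcases eq_or_ne y 0 with rfl | hy0
  · exact ⟨0, by simp⟩
  have hx1 : ¬ InF F x := hx1.resolve_left hx0
  have hy1 : ¬ InF F y := hy1.resolve_left hy0
  obtain ⟨t, n, hsum⟩ := deg2' hdeg2 (x + y)
  obtain ⟨t', n', hdif⟩ := deg2' hdeg2 (x - y)
  have hsum' : x*x + (x*y + y*x) + y*y = t • (x+y) + n • (1:D) := by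
    rw [← hsum]; simp only [mul_add, add_mul]; abel
  have hdif' : x*x - (x*y + y*x) + y*y = t' • (x-y) + n' • (1:D) := by
    rw [← hdif]; simp only [mul_sub, sub_mul]; abel
  have e1 : x*y + y*x = t • x + t • y + (n - a - b) • (1:D) := by
    refine eq_of_sub_eq_sub ?_ hsum'
    rw [hx2, hy2]; module
  have e2 : x*y + y*x = (-t') • x + t' • y + (a + b - n') • (1:D) := by
    refine eq_of_sub_eq_sub ?_ hdif'.symm
    rw [hx2, hy2]; module
  have e3 : (t + t') • x = (t' - t) • y + ((a + b - n') - (n - a - b)) • (1:D) := by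
    refine eq_of_sub_eq_sub ?_ (e1.symm.trans e2)
    module
  by_cases hu : t + t' = 0
  · by_cases hw : t' - t = 0
    · have ht0 : t = 0 := by
        have h1 := sub_eq_zero.mp hw
        have h2t : (2:F) * t = 0 := by rw [h1] at hu; linear_combination hu
        rcases mul_eq_zero.mp h2t with h | h
        · exact absurd h hchar
        · exact h
      exact ⟨n - a - b, by rw [e1, ht0]; module⟩
    · exfalso
      apply hy1
      have hyy : (t' - t) • y = (-((a + b - n') - (n - a - b))) • (1:D) := by
        refine eq_of_sub_eq_sub ?_ e3.symm
        rw [hu]; module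
      exact ⟨(t' - t)⁻¹ * (-((a + b - n') - (n - a - b))),
        by rw [mul_smul, ← hyy, inv_smul_smul₀ hw]⟩
  · have hx' : x = ((t+t')⁻¹ * ((a + b - n') - (n - a - b))) • (1:D)
        + ((t+t')⁻¹ * (t' - t)) • y := by
      calc x = (t+t')⁻¹ • ((t+t') • x) := (inv_smul_smul₀ hu x).symm
        _ = (t+t')⁻¹ • ((t' - t) • y + ((a + b - n') - (n - a - b)) • (1:D)) := by rw [e3]
        _ = _ := by module
    exact anticomm_of_span hchar hx2 hy2 hx1 hy1 hx'


theorem pure_smul {x : D} (hx : Pure F x) (c : F) : Pure F (c • x) := by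
  obtain ⟨⟨a, hx2⟩, hx1⟩ := hx
  refine ⟨⟨c * c * a, by rw [smul_mul_assoc, mul_smul_comm, hx2, smul_smul, smul_smul, mul_assoc]⟩, ?_⟩
  rcases eq_or_ne c 0 with rfl | hc
  · exact Or.inl (zero_smul F x)
  rcases hx1 with rfl | hx1
  · exact Or.inl (smul_zero c)
  · exact Or.inr (not_inF_smul hx1 hc)

theorem pure_add (hchar : (2:F) ≠ 0)
    (hdeg2 : ∀ x : D, ∃ t n : F,
      x ^ 2 - algebraMap F D t * x + algebraMap F D n = 0)
    {x y : D} (hx : Pure F x) (hy : Pure F y) : Pure F (x + y) := by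
  obtain ⟨s, hs⟩ := anticomm hchar hdeg2 hx hy
  obtain ⟨⟨a, hx2⟩, hx1⟩ := hx
  obtain ⟨⟨b, hy2⟩, hy1⟩ := hy
  refine ⟨⟨a + s + b, ?_⟩, ?_⟩
  · calc (x+y)*(x+y) = x*x + (x*y + y*x) + y*y := by
          simp only [mul_add, add_mul]; abel
      _ = (a + s + b) • (1:D) := by rw [hx2, hy2, hs]; module
  · rcases eq_or_ne x 0 with rfl | hx0
    · simpa using hy1
    rcases eq_or_ne y 0 with rfl | hy0
    · simpa using hx1
    have hx1 : ¬ InF F x := hx1.resolve_left hx0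
    have hy1 : ¬ InF F y := hy1.resolve_left hy0
    rcases eq_or_ne (x + y) 0 with h0 | h0
    · exact Or.inl h0
    refine Or.inr ?_
    rintro ⟨c, hc⟩
    have hyx : y = c • (1:D) - x := by
      rw [← hc]; abel
    have hyy : b • (1:D) = (c*c + a) • (1:D) - (2*c) • x := by
      rw [← hy2, hyx]
      simp only [sub_mul, mul_sub, smul_mul_assoc, mul_smul_comm, smul_smul, one_mul, mul_one]
      rw [hx2]
      module
    have hxx : (2*c) • x = (c*c + a - b) • (1:D) := by
      refine eq_of_sub_eq_sub ?_ hyy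
      module
    rcases eq_or_ne (2*c) 0 with h2c | h2c
    · rcases mul_eq_zero.mp h2c with h | h
      · exact absurd h hchar
      · rw [h, zero_smul] at hc
        exact absurd hc h0
    · exact hx1 ⟨(2*c)⁻¹ * (c*c + a - b),
        by rw [mul_smul, ← hxx, inv_smul_smul₀ h2c]⟩

end FrobAux


/-- Extended Frobenius theorem: a division algebra of degree 2 over a field F
of characteristic ≠ 2 is either a quadratic field extension of F or a
quaternion algebra over F. -/
theorem degree_two_division_algebra_classification
    (F D : Type*) [Field F] [DivisionRing D] [Algebra F D]
    (hchar : (2 : F) ≠ 0)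
    (hdeg2 : ∀ x : D, ∃ t n : F,
      x ^ 2 - algebraMap F D t * x + algebraMap F D n = 0)
    (hnot1 : ∃ x : D, x ∉ Set.range (algebraMap F D)) :
    ((∀ x y : D, x * y = y * x) ∧ Module.finrank F D = 2) ∨
      (∃ a b : F, a ≠ 0 ∧ b ≠ 0 ∧ Nonempty (D ≃ₐ[F] ℍ[F, a, b])) := by
  classical
  haveI : NoZeroSMulDivisors F D :=
    inferInstance
  obtain ⟨x0, hx0⟩ := hnot1
  have hx0' : ¬ FrobAux.InF F x0 := by
    rintro ⟨c, rfl⟩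
    exact hx0 ⟨c, (Algebra.algebraMap_eq_smul_one c : algebraMap F D c = c • (1:D))⟩
  obtain ⟨c0, i, hx0i, hi⟩ := FrobAux.decomp hdeg2 hchar x0
  have hi0 : i ≠ 0 := by
    rintro rfl
    exact hx0' ⟨c0, by simpa using hx0i⟩
  have hiF : ¬ FrobAux.InF F i := hi.2.resolve_left hi0
  obtain ⟨a, hia⟩ := hi.1
  have ha : a ≠ 0 := FrobAux.sq_ne_zero hia hi0
  have h2a : (2*a : F) ≠ 0 := mul_ne_zero hchar ha
  by_cases H : ∀ v : D, FrobAux.Pure F v → ∃ d : F, v = d • i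
  · -- commutative quadratic case
    left
    have hdecomp : ∀ z : D, ∃ c d : F, z = c • (1:D) + d • i := by
      intro z
      obtain ⟨c, v, rfl, hv⟩ := FrobAux.decomp hdeg2 hchar z
      obtain ⟨d, rfl⟩ := H v hv
      exact ⟨c, d, rfl⟩
    constructor
    · intro x y
      obtain ⟨c1, d1, rfl⟩ := hdecomp x
      obtain ⟨c2, d2, rfl⟩ := hdecomp y
      simp only [mul_add, add_mul, smul_mul_assoc, mul_smul_comm, smul_smul, one_mul, mul_one]
      module
    · have hli : LinearIndependent F ![(1:D), i] := by
        rw [LinearIndependent.pair_iff]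
        intro s t hst
        by_cases ht : t = 0
        · refine ⟨?_, ht⟩
          rw [ht, zero_smul, add_zero] at hst
          exact FrobAux.smul_one_eq_zero hst
        · exfalso
          apply hiF
          have h1 : t • i = (-s) • (1:D) := by
            rw [neg_smul]
            exact eq_neg_of_add_eq_zero_right hst
          exact ⟨t⁻¹ * (-s), by rw [mul_smul, ← h1, inv_smul_smul₀ ht]⟩
      have hsp : ⊤ ≤ Submodule.span F (Set.range ![(1:D), i]) := by
        intro z _
        obtain ⟨c, d, rfl⟩ := hdecomp z
        have hr : Set.range ![(1:D), i] = {(1:D), i} := by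
          simp [Matrix.range_cons, Matrix.range_empty, Set.pair_comm]
        rw [hr]
        exact Submodule.mem_span_pair.mpr ⟨c, d, rfl⟩
      rw [Module.finrank_eq_card_basis (Module.Basis.mk hli hsp)]
      simp
  · -- quaternion case
    right
    push_neg at H
    obtain ⟨j0, hj0p, hj0⟩ := H
    obtain ⟨s0, hs0⟩ := FrobAux.anticomm hchar hdeg2 hi hj0p
    set c1 : F := -(s0/(2*a)) with hc1
    set j : D := j0 + c1 • i with hjdef
    have hjp : FrobAux.Pure F j :=
      FrobAux.pure_add hchar hdeg2 hj0p (FrobAux.pure_smul hi c1)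
    have hj0' : j ≠ 0 := by
      intro h
      rw [hjdef] at h
      apply hj0 (-c1)
      have h1 : j0 = -(c1 • i) := eq_neg_of_add_eq_zero_left h
      rw [h1]; module
    have hjF : ¬ FrobAux.InF F j := hjp.2.resolve_left hj0'
    obtain ⟨b, hjb⟩ := hjp.1
    have hb : b ≠ 0 := FrobAux.sq_ne_zero hjb hj0'
    have h2b : (2*b : F) ≠ 0 := mul_ne_zero hchar hb
    have hij : i * j + j * i = 0 := by
      have e : i*j + j*i = (s0 + (c1*a + c1*a)) • (1:D) := by
        calc i*j + j*i = (i*j0 + j0*i) + (c1 • (i*i) + c1 • (i*i)) := by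
              rw [hjdef]
              simp only [mul_add, add_mul, smul_mul_assoc, mul_smul_comm]
              abel
          _ = _ := by rw [hs0, hia]; module
      rw [e, show s0 + (c1*a + c1*a) = 0 from by rw [hc1]; field_simp; ring, zero_smul]
    have hji : j * i = -(i * j) := eq_neg_of_add_eq_zero_right hij
    -- basic products
    have hik : i*(i*j) = a • j := by rw [← mul_assoc, hia, smul_mul_assoc, one_mul]
    have hki : (i*j)*i = -(a • j) := by rw [mul_assoc, hji, mul_neg, hik]
    have hkj : (i*j)*j = b • i := by rw [mul_assoc, hjb, mul_smul_comm, mul_one]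
    have hjk : j*(i*j) = -(b • i) := by rw [← mul_assoc, hji, neg_mul, hkj]
    have hkk : (i*j)*(i*j) = (-(a*b)) • (1:D) := by
      calc (i*j)*(i*j) = i*(j*(i*j)) := by rw [mul_assoc]
        _ = -(b • (i*i)) := by rw [hjk, mul_neg, mul_smul_comm]
        _ = (-(a*b)) • (1:D) := by rw [hia]; module
    have hk0 : i*j ≠ 0 := mul_ne_zero hi0 hj0'
    have hkF : ¬ FrobAux.InF F (i*j) := by
      rintro ⟨e, he⟩
      have h1 : a • j = e • i := by rw [← hik, he, mul_smul_comm, mul_one]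
      have h2 : -(a • j) = e • i := by rw [← hki, he, smul_mul_assoc, one_mul]
      have h3 : a • j = -(a • j) := h1.trans h2.symm
      have h4 : (2*a) • j = 0 := by
        rw [two_mul, add_smul]
        nth_rewrite 1 [h3]
        exact neg_add_cancel _
      rcases smul_eq_zero.mp h4 with h | h
      · exact h2a h
      · exact hj0' h
    have hkp : FrobAux.Pure F (i*j) := ⟨⟨-(a*b), hkk⟩, Or.inr hkF⟩
    -- quaternion basis and lift
    let Q : QuaternionAlgebra.Basis D a 0 b :=
      { i := i, j := j, k := i*j,
        i_mul_i := by rw [hia, zero_smul, add_zero],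
        j_mul_j := by rw [hjb],
        i_mul_j := rfl,
        j_mul_i := by rw [hji, zero_smul, zero_sub] }
    let f : ℍ[F,a,b] →ₐ[F] D := Q.liftHom
    have hf : ∀ q : ℍ[F,a,b],
        f q = q.re • (1:D) + q.imI • i + q.imJ • j + q.imK • (i*j) := by
      intro q
      show Q.lift q = _
      rw [QuaternionAlgebra.Basis.lift, Algebra.algebraMap_eq_smul_one]
    have h2D : (2:D) ≠ 0 := by
      intro h
      apply hchar
      have h1 : algebraMap F D 2 = 0 := by rw [map_ofNat]; exact_mod_cast h
      exact (map_eq_zero_iff _ (algebraMap F D).injective).mp h1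
    -- injectivity
    have hinj : Function.Injective f := by
      rw [injective_iff_map_eq_zero]
      intro q hq0
      obtain ⟨x, y, z, w⟩ := q
      have hE : x • (1:D) + y • i + z • j + w • (i*j) = 0 := by
        rw [← hf ⟨x,y,z,w⟩]; exact hq0
      have hid : ((2*z) • i + (2*(w*a)) • (1:D)) * j
          = i * (x • (1:D) + y • i + z • j + w • (i*j))
            - (x • (1:D) + y • i + z • j + w • (i*j)) * i := by
        simp only [mul_add, add_mul, mul_sub, sub_mul, smul_mul_assoc, mul_smul_comm,
          one_mul, mul_one]
        rw [hji, hik, hki]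
        module
      have h2 : ((2*z) • i + (2*(w*a)) • (1:D)) * j = 0 := by
        rw [hid, hE]; simp
      have h3 : (2*z) • i + (2*(w*a)) • (1:D) = 0 := by
        rcases mul_eq_zero.mp h2 with h | h
        · exact h
        · exact absurd h hj0'
      have hz : z = 0 := by
        by_contra hz
        apply hiF
        have h2z : (2*z : F) ≠ 0 := mul_ne_zero hchar hz
        have h5 : (2*z) • i = (-(2*(w*a))) • (1:D) := by
          rw [neg_smul]
          exact eq_neg_of_add_eq_zero_left h3
        exact ⟨(2*z)⁻¹ * (-(2*(w*a))), by rw [mul_smul, ← h5, inv_smul_smul₀ h2z]⟩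
      have hw' : w = 0 := by
        rw [hz, mul_zero, zero_smul, zero_add] at h3
        have h6 := FrobAux.smul_one_eq_zero h3
        rcases mul_eq_zero.mp h6 with h | h
        · exact absurd h hchar
        · rcases mul_eq_zero.mp h with h | h
          · exact h
          · exact absurd h ha
      have hE2 : x • (1:D) + y • i = 0 := by
        rw [hz, hw'] at hE
        simpa using hE
      have hy : y = 0 := by
        by_contra hy
        apply hiF
        have h7 : y • i = (-x) • (1:D) := by
          rw [neg_smul]
          exact eq_neg_of_add_eq_zero_right hE2
        exact ⟨y⁻¹ * (-x), by rw [mul_smul, ← h7, inv_smul_smul₀ hy]⟩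
      have hx : x = 0 := by
        rw [hy, zero_smul, add_zero] at hE2
        exact FrobAux.smul_one_eq_zero hE2
      subst hx hy hz hw'
      rfl
    -- surjectivity
    have hsurj : Function.Surjective f := by
      intro z
      obtain ⟨c, v, rfl, hv⟩ := FrobAux.decomp hdeg2 hchar z
      obtain ⟨p, hp⟩ := FrobAux.anticomm hchar hdeg2 hi hv
      obtain ⟨q, hq⟩ := FrobAux.anticomm hchar hdeg2 hjp hv
      obtain ⟨r, hr⟩ := FrobAux.anticomm hchar hdeg2 hkp hv
      set p' : F := p/(2*a) with hp'
      set q' : F := q/(2*b) with hq'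
      set r' : F := r/(-(2*(a*b))) with hr'
      set w : D := v - p' • i - q' • j - r' • (i*j) with hw
      have hwi : i*w + w*i = 0 := by
        have e : i*w + w*i = (i*v + v*i) - p' • (i*i + i*i)
            - q' • (i*j + j*i) - r' • (i*(i*j) + (i*j)*i) := by
          rw [hw]
          simp only [mul_add, add_mul, mul_sub, sub_mul, smul_mul_assoc, mul_smul_comm]
          module
        rw [e, hp, hij, hia,
          show i*(i*j) + (i*j)*i = 0 from by rw [hik, hki]; exact add_neg_cancel _,
          smul_zero, smul_zero, sub_zero, sub_zero,
          show p • (1:D) - p' • (a • (1:D) + a • (1:D)) = (p - (p'*a + p'*a)) • (1:D)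
            from by module,
          show p - (p'*a + p'*a) = 0 from by rw [hp']; field_simp; ring, zero_smul]
      have hwj : j*w + w*j = 0 := by
        have e : j*w + w*j = (j*v + v*j) - p' • (j*i + i*j)
            - q' • (j*j + j*j) - r' • (j*(i*j) + (i*j)*j) := by
          rw [hw]
          simp only [mul_add, add_mul, mul_sub, sub_mul, smul_mul_assoc, mul_smul_comm]
          module
        rw [e, hq, hjb,
          show j*i + i*j = 0 from by rw [add_comm]; exact hij,
          show j*(i*j) + (i*j)*j = 0 from by rw [hjk, hkj]; exact neg_add_cancel _,
          smul_zero, smul_zero, sub_zero, sub_zero,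
          show q • (1:D) - q' • (b • (1:D) + b • (1:D)) = (q - (q'*b + q'*b)) • (1:D)
            from by module,
          show q - (q'*b + q'*b) = 0 from by rw [hq']; field_simp; ring, zero_smul]
      have hwk : (i*j)*w + w*(i*j) = 0 := by
        have e : (i*j)*w + w*(i*j) = ((i*j)*v + v*(i*j)) - p' • ((i*j)*i + i*(i*j))
            - q' • ((i*j)*j + j*(i*j)) - r' • ((i*j)*(i*j) + (i*j)*(i*j)) := by
          rw [hw]
          simp only [mul_add, add_mul, mul_sub, sub_mul, smul_mul_assoc, mul_smul_comm]
          module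
        rw [e, hr, hkk,
          show (i*j)*i + i*(i*j) = 0 from by rw [hki, hik]; exact neg_add_cancel _,
          show (i*j)*j + j*(i*j) = 0 from by rw [hkj, hjk]; exact add_neg_cancel _,
          smul_zero, smul_zero, sub_zero, sub_zero,
          show r • (1:D) - r' • ((-(a*b)) • (1:D) + (-(a*b)) • (1:D))
              = (r - (r'*(-(a*b)) + r'*(-(a*b)))) • (1:D) from by module,
          show r - (r'*(-(a*b)) + r'*(-(a*b))) = 0 from by rw [hr']; field_simp; ring,
          zero_smul]
      have hiw : i*w = -(w*i) := eq_neg_of_add_eq_zero_left hwi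
      have hjw : j*w = -(w*j) := eq_neg_of_add_eq_zero_left hwj
      have hcomm : (i*j)*w = w*(i*j) := by
        calc (i*j)*w = i*(j*w) := by rw [mul_assoc]
          _ = -(i*(w*j)) := by rw [hjw, mul_neg]
          _ = -((i*w)*j) := by rw [mul_assoc]
          _ = (w*i)*j := by rw [hiw, neg_mul, neg_neg]
          _ = w*(i*j) := by rw [mul_assoc]
      have hw0 : w = 0 := by
        rw [hcomm] at hwk
        have h3 : (2:D) * (w*(i*j)) = 0 := by rw [two_mul]; exact hwk
        rcases mul_eq_zero.mp h3 with h | h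
        · exact absurd h h2D
        · rcases mul_eq_zero.mp h with h | h
          · exact h
          · exact absurd h hk0
      refine ⟨⟨c, p', q', r'⟩, ?_⟩
      rw [hf ⟨c, p', q', r'⟩]
      have hv' : v = p' • i + q' • j + r' • (i*j) := by
        calc v = (v - p' • i - q' • j - r' • (i*j)) + (p' • i + q' • j + r' • (i*j)) := by
              abel
          _ = p' • i + q' • j + r' • (i*j) := by rw [← hw, hw0, zero_add]
      rw [hv']
      show c • (1:D) + p' • i + q' • j + r' • (i*j) = _
      abel
    exact ⟨a, b, ha, hb, ⟨(AlgEquiv.ofBijective f ⟨hinj, hsurj⟩).symm⟩⟩
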